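/- Let n = 2^d and a ∈ ℝ^{2^d} have QTT representation a(k) = A⁽¹⁾_{k₁} ⋯ A⁽ᵈ⁾_{k_d}. Then the left-shifted vector c = [a(1), a(2), ..., a(2^d - 1), y]ᵀ has QTT representation c(k) = C⁽¹⁾_{k₁} ⋯ C⁽ᵈ⁾_{k_d} with cores C⁽¹⁾₀ = [A⁽¹⁾₁ 0], C⁽¹⁾₁ = [0 1], C⁽ᵖ⁾₀ = [[A⁽ᵖ⁾₀, 0], [c_p, 0]], C⁽ᵖ⁾₁ = [[A⁽ᵖ⁾₁, 0], [0, 1]] for 2 ≤ p ≤ d-1, C⁽ᵈ⁾₀ = [[A⁽ᵈ⁾₀], [c_d]], C⁽ᵈ⁾₁ = [[A⁽ᵈ⁾₁], [y]], where c_q = A⁽¹⁾₀ ⋯ A⁽q-1⁾₀ A⁽q⁾₁. -/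

import Mathlib

/-- Product `M₀ M₁ ⋯ M_{d-1}` of a chain of matrices of compatible sizes
(tensor-train core product). -/
noncomputable def ttProd (ι : ℕ → Type) [∀ p, Fintype (ι p)] [∀ p, DecidableEq (ι p)] :
    (d : ℕ) → ((p : ℕ) → p < d → Matrix (ι p) (ι (p + 1)) ℝ) → Matrix (ι 0) (ι d) ℝ
  | 0, _ => 1
  | d + 1, A => ttProd ι d (fun p hp => A p (Nat.lt_succ_of_lt hp)) * A d (Nat.lt_succ_self d)

/-- The `p`-th binary digit (little-endian) of `k`. -/
def qttBit (p k : ℕ) : Fin 2 := ⟨k / 2 ^ p % 2, Nat.mod_lt _ (by norm_num)⟩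

-- arithmetic helpers
lemma qttBit_val (p k : ℕ) : (qttBit p k : ℕ) = k / 2 ^ p % 2 := rfl

lemma mod_split (s k : ℕ) : k % 2 ^ (s + 1) = k % 2 ^ s + 2 ^ s * (qttBit s k : ℕ) := by
  rw [qttBit_val, pow_succ, Nat.mod_mul]

lemma succ_mod_div (s k : ℕ) (h : k % 2 ^ s ≠ 2 ^ s - 1) :
    (k + 1) % 2 ^ s = k % 2 ^ s + 1 ∧ (k + 1) / 2 ^ s = k / 2 ^ s := by
  have h2 : 0 < 2 ^ s := Nat.pow_pos (by norm_num)
  have hm : k % 2 ^ s < 2 ^ s := Nat.mod_lt _ h2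
  have hm1 : k % 2 ^ s + 1 < 2 ^ s := by omega
  have hd := Nat.div_add_mod k (2 ^ s)
  have hk : k + 1 = 2 ^ s * (k / 2 ^ s) + (k % 2 ^ s + 1) := by omega
  constructor
  · rw [hk, Nat.mul_add_mod, Nat.mod_eq_of_lt hm1]
  · rw [hk, Nat.mul_add_div h2, Nat.div_eq_of_lt hm1, Nat.add_zero]

lemma qttBit_succ_of_ne (s k : ℕ) (h : k % 2 ^ s ≠ 2 ^ s - 1) :
    qttBit s (k + 1) = qttBit s k := by
  apply Fin.ext
  rw [qttBit_val, qttBit_val, (succ_mod_div s k h).2]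

lemma qttBit_mod (p s k : ℕ) (h : p < s) : qttBit p (k % 2 ^ s) = qttBit p k := by
  apply Fin.ext
  rw [qttBit_val, qttBit_val, ← Nat.mod_mul_right_div_self, ← Nat.mod_mul_right_div_self k,
    Nat.mod_mod_of_dvd]
  rw [← pow_succ]
  exact pow_dvd_pow 2 h

lemma qttBit_two_pow (p s : ℕ) (h : p ≤ s) :
    qttBit p (2 ^ s) = if p = s then 1 else 0 := by
  apply Fin.ext
  rw [qttBit_val, Nat.pow_div h (by norm_num)]
  rcases Nat.eq_or_lt_of_le h with h' | h'
  · simp [h']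
  · have : p ≠ s := by omega
    simp only [this, if_false]
    obtain ⟨m, hm⟩ : ∃ m, s - p = m + 1 := ⟨s - p - 1, by omega⟩
    rw [hm, pow_succ, Nat.mul_mod_left]
    rfl

lemma qttBit_ne_zero {p k : ℕ} (h : qttBit p k ≠ 0) : qttBit p k = 1 := by
  have h2 := (qttBit p k).isLt
  have h0 : (qttBit p k : ℕ) ≠ 0 := fun hc => h (Fin.ext hc)
  exact Fin.ext (by omega)

section
variable (ι : ℕ → Type) [∀ p, Fintype (ι p)] [∀ p, DecidableEq (ι p)]

lemma ttProd_congr (d : ℕ) (F G : (p : ℕ) → p < d → Matrix (ι p) (ι (p + 1)) ℝ)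
    (h : ∀ p (hp : p < d), F p hp = G p hp) : ttProd ι d F = ttProd ι d G := by
  induction d with
  | zero => rfl
  | succ d ih =>
    show ttProd ι d _ * _ = ttProd ι d _ * _
    rw [ih _ _ (fun p hp => h p _), h]
end

section prodlems
variable (ι : ℕ → Type) [∀ p, Fintype (ι p)] [∀ p, DecidableEq (ι p)]
lemma ttProd_succ (d : ℕ) (F : (p : ℕ) → p < d + 1 → Matrix (ι p) (ι (p + 1)) ℝ) :
    ttProd ι (d + 1) F =
      ttProd ι d (fun p hp => F p (Nat.lt_succ_of_lt hp)) * F d (Nat.lt_succ_self d) := rfl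
lemma ttProd_zero (F : (p : ℕ) → p < 0 → Matrix (ι p) (ι (p + 1)) ℝ) :
    ttProd ι 0 F = 1 := rfl
end prodlems

section cores
variable (ι : ℕ → Type) [∀ p, Fintype (ι p)] [∀ p, DecidableEq (ι p)] [Unique (ι 0)]
variable (A : (p : ℕ) → Fin 2 → Matrix (ι p) (ι (p + 1)) ℝ)

noncomputable def firstCore (k : ℕ) : Matrix (ι 0) (ι 1 ⊕ Unit) ℝ :=
  Matrix.of fun (i : ι 0) (jc : ι 1 ⊕ Unit) =>
    if qttBit 0 k = 0 then
      Sum.elim (fun j => A 0 1 i j) (fun _ => 0) jc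
    else Sum.elim (fun _ => (0 : ℝ)) (fun _ => 1) jc

noncomputable def midCore (k q : ℕ) : Matrix (ι (q + 1) ⊕ Unit) (ι (q + 2) ⊕ Unit) ℝ :=
  if qttBit (q + 1) k = 0 then
    Matrix.fromBlocks (A (q + 1) 0) 0
      (Matrix.of fun (_ : Unit) j =>
        ttProd ι (q + 2)
          (fun p' _ => A p' (if p' = q + 1 then 1 else 0)) default j) 0
  else
    Matrix.fromBlocks (A (q + 1) 1) 0 0 1

noncomputable def lastCore (y : ℝ) (k s : ℕ) : Matrix (ι (s + 1) ⊕ Unit) (ι (s + 2)) ℝ :=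
  Matrix.of fun (ic : ι (s + 1) ⊕ Unit) (j : ι (s + 2)) =>
    if qttBit (s + 1) k = 0 then
      Sum.elim (fun i => A (s + 1) 0 i j)
        (fun _ => ttProd ι (s + 2)
          (fun p' _ => A p' (if p' = s + 1 then 1 else 0)) default j) ic
    else
      Sum.elim (fun i => A (s + 1) 1 i j) (fun _ => y) ic

lemma carry_bits (k q : ℕ) (hall : k % 2 ^ (q + 1) = 2 ^ (q + 1) - 1)
    (hb : qttBit (q + 1) k = 0) :
    (k % 2 ^ (q + 2) = 2 ^ (q + 1) - 1) ∧
      ∀ p, p < q + 2 → qttBit p (k + 1) = if p = q + 1 then 1 else 0 := by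
  have h1 : 0 < 2 ^ (q + 1) := Nat.pow_pos (by norm_num)
  have h2 : (2:ℕ) ^ (q + 2) = 2 ^ (q + 1) * 2 := by rw [pow_succ]
  have hmod : k % 2 ^ (q + 2) = 2 ^ (q + 1) - 1 := by
    rw [mod_split, hall, hb]
    simp
  refine ⟨hmod, fun p hp => ?_⟩
  have hne : k % 2 ^ (q + 2) ≠ 2 ^ (q + 2) - 1 := by rw [hmod]; omega
  have hsucc : (k + 1) % 2 ^ (q + 2) = 2 ^ (q + 1) := by
    rw [(succ_mod_div _ _ hne).1, hmod]; omega
  rw [← qttBit_mod p (q + 2) (k + 1) hp, hsucc, qttBit_two_pow p (q + 1) (by omega)]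

lemma partial_prod (k : ℕ) (q : ℕ) :
    firstCore ι A k *
        ttProd (fun p => ι (p + 1) ⊕ Unit) q (fun r _ => midCore ι A k r) =
      Matrix.of fun (_ : ι 0) (jc : ι (q + 1) ⊕ Unit) =>
        if k % 2 ^ (q + 1) = 2 ^ (q + 1) - 1 then
          Sum.elim (fun _ => (0 : ℝ)) (fun _ => 1) jc
        else
          Sum.elim
            (fun j => ttProd ι (q + 1) (fun p _ => A p (qttBit p (k + 1))) default j)
            (fun _ => 0) jc := by
  induction q with
  | zero =>
    show firstCore ι A k * 1 = _
    rw [Matrix.mul_one]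
    ext i jc
    have hi : i = default := Unique.eq_default i
    have hv : (qttBit 0 k : ℕ) = k % 2 := by rw [qttBit_val, pow_zero, Nat.div_one]
    by_cases hb : qttBit 0 k = 0
    · have hk2 : k % 2 = 0 := by rw [← hv, hb]; rfl
      have hcond : ¬ (k % 2 ^ 1 = 2 ^ 1 - 1) := by simpa using (by omega : ¬ (k % 2 = 1))
      have hb1 : qttBit 0 (k + 1) = 1 := by
        apply Fin.ext
        rw [qttBit_val, pow_zero, Nat.div_one]
        omega
      simp only [firstCore, Matrix.of_apply, hb, if_true, hcond, if_false]
      cases jc with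
      | inl j =>
        simp only [Sum.elim_inl, hi]
        rw [ttProd_succ, ttProd_zero, Matrix.one_mul, hb1]
      | inr u => simp
    · have hb1 := qttBit_ne_zero hb
      have hk2 : k % 2 = 1 := by rw [← hv, hb1]; rfl
      have hcond : k % 2 ^ 1 = 2 ^ 1 - 1 := by simpa using hk2
      simp only [firstCore, Matrix.of_apply, hb, if_false, hcond, if_true]
  | succ q ih =>
    have hstep : ttProd (fun p => ι (p + 1) ⊕ Unit) (q + 1) (fun r _ => midCore ι A k r) =
        ttProd (fun p => ι (p + 1) ⊕ Unit) q (fun r _ => midCore ι A k r) * midCore ι A k q :=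
      rfl
    rw [hstep, ← Matrix.mul_assoc, ih]
    ext i jc
    rw [Matrix.mul_apply]
    have h1 : 0 < 2 ^ (q + 1) := Nat.pow_pos (by norm_num)
    have h2 : (2:ℕ) ^ (q + 2) = 2 ^ (q + 1) * 2 := by rw [pow_succ]
    by_cases hall : k % 2 ^ (q + 1) = 2 ^ (q + 1) - 1
    · by_cases hb : qttBit (q + 1) k = 0
      · -- carry into zero bit
        obtain ⟨hmod, hbits⟩ := carry_bits k q hall hb
        have hcond : ¬ (k % 2 ^ (q + 2) = 2 ^ (q + 2) - 1) := by rw [hmod]; omega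
        have hmid : midCore ι A k q = Matrix.fromBlocks (A (q + 1) 0) 0
            (Matrix.of fun (_ : Unit) j =>
              ttProd ι (q + 2)
                (fun p' _ => A p' (if p' = q + 1 then 1 else 0)) default j) 0 := by
          rw [midCore, if_pos hb]
        simp only [Matrix.of_apply, hall, if_true, hcond, if_false, hmid,
          Fintype.sum_sum_type, Sum.elim_inl, Sum.elim_inr, zero_mul, Finset.sum_const_zero,
          zero_add]
        have hcg := ttProd_congr ι (q + 2) (fun p _ => A p (qttBit p (k + 1)))
          (fun p' _ => A p' (if p' = q + 1 then 1 else 0))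
          (fun p hp => by
            show A p (qttBit p (k + 1)) = A p (if p = q + 1 then 1 else 0)
            rw [hbits p hp])
        cases jc with
        | inl j =>
          simp only [Sum.elim_inl, Matrix.fromBlocks_apply₂₁, Matrix.of_apply, one_mul]
          rw [Finset.sum_const, Finset.card_univ, Fintype.card_unit, one_smul, hcg]
        | inr u =>
          simp only [Sum.elim_inr, Matrix.fromBlocks_apply₂₂, Matrix.zero_apply, mul_zero,
            Finset.sum_const_zero]
      · -- all ones continues
        have hb1 := qttBit_ne_zero hb
        have hmod : k % 2 ^ (q + 2) = 2 ^ (q + 2) - 1 := by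
          rw [mod_split, hall, hb1]
          show _ + 2 ^ (q + 1) * 1 = _
          omega
        have hmid : midCore ι A k q = Matrix.fromBlocks (A (q + 1) 1) 0 0 1 := by
          rw [midCore, if_neg hb]
        simp only [Matrix.of_apply, hall, if_true, hmod, if_true, hmid,
          Fintype.sum_sum_type, Sum.elim_inl, Sum.elim_inr, zero_mul, Finset.sum_const_zero,
          zero_add, one_mul]
        cases jc with
        | inl j =>
          simp only [Sum.elim_inl, Matrix.fromBlocks_apply₂₁, Matrix.zero_apply,
            Finset.sum_const_zero]
        | inr u =>
          simp only [Sum.elim_inr, Matrix.fromBlocks_apply₂₂, Matrix.one_apply_eq]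
          rw [Finset.sum_const, Finset.card_univ, Fintype.card_unit, one_smul]
    · -- no carry
      have hbq := qttBit_succ_of_ne (q + 1) k hall
      have hmodeq : k % 2 ^ (q + 2) = k % 2 ^ (q + 1) + 2 ^ (q + 1) * (qttBit (q + 1) k : ℕ) :=
        mod_split (q + 1) k
      have hcond : ¬ (k % 2 ^ (q + 2) = 2 ^ (q + 2) - 1) := by
        intro hc
        rw [hmodeq] at hc
        have hlt := Nat.mod_lt k h1
        rcases (by omega : (qttBit (q + 1) k : ℕ) = 0 ∨ (qttBit (q + 1) k : ℕ) = 1) with h | h <;>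
          rw [h] at hc <;> omega
      have hunf : ∀ b : Fin 2, qttBit (q + 1) (k + 1) = b →
          ∀ j, ttProd ι (q + 2) (fun p _ => A p (qttBit p (k + 1))) default j =
            ∑ j', ttProd ι (q + 1) (fun p _ => A p (qttBit p (k + 1))) default j' *
              A (q + 1) b j' j := by
        intro b hbb j
        rw [ttProd_succ, Matrix.mul_apply, hbb]
      by_cases hb : qttBit (q + 1) k = 0
      · have hb1 : qttBit (q + 1) (k + 1) = 0 := by rw [hbq, hb]
        have hmid : midCore ι A k q = Matrix.fromBlocks (A (q + 1) 0) 0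
            (Matrix.of fun (_ : Unit) j =>
              ttProd ι (q + 2)
                (fun p' _ => A p' (if p' = q + 1 then 1 else 0)) default j) 0 := by
          rw [midCore, if_pos hb]
        simp only [Matrix.of_apply, hall, if_false, hcond, if_false, hmid,
          Fintype.sum_sum_type, Sum.elim_inl, Sum.elim_inr, zero_mul, Finset.sum_const_zero,
          add_zero]
        cases jc with
        | inl j =>
          simp only [Sum.elim_inl, Matrix.fromBlocks_apply₁₁]
          rw [hunf 0 hb1 j]
        | inr u =>
          simp only [Sum.elim_inr, Matrix.fromBlocks_apply₁₂, Matrix.zero_apply, mul_zero,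
            Finset.sum_const_zero]
      · have hbk1 := qttBit_ne_zero hb
        have hb1 : qttBit (q + 1) (k + 1) = 1 := by rw [hbq, hbk1]
        have hmid : midCore ι A k q = Matrix.fromBlocks (A (q + 1) 1) 0 0 1 := by
          rw [midCore, if_neg hb]
        simp only [Matrix.of_apply, hall, if_false, hcond, if_false, hmid,
          Fintype.sum_sum_type, Sum.elim_inl, Sum.elim_inr, zero_mul, Finset.sum_const_zero,
          add_zero]
        cases jc with
        | inl j =>
          simp only [Sum.elim_inl, Matrix.fromBlocks_apply₁₁]
          rw [hunf 1 hb1 j]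
        | inr u =>
          simp only [Sum.elim_inr, Matrix.fromBlocks_apply₁₂, Matrix.zero_apply, mul_zero,
            Finset.sum_const_zero]
end cores


/-- QTT representation of the left shift `c = [a(1), …, a(2^d-1), y]`:
the shifted vector has explicit QTT cores.  Here `d = e + 2`. -/
theorem qtt_left_shift
    (e : ℕ)
    (ι : ℕ → Type) [∀ p, Fintype (ι p)] [∀ p, DecidableEq (ι p)]
    [Unique (ι 0)] [Unique (ι (e + 2))]
    (A : (p : ℕ) → Fin 2 → Matrix (ι p) (ι (p + 1)) ℝ)
    (a c : Fin (2 ^ (e + 2)) → ℝ) (y : ℝ)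
    (ha : ∀ k : Fin (2 ^ (e + 2)),
      a k = ttProd ι (e + 2) (fun p _ => A p (qttBit p (k : ℕ))) default default)
    (hcs : ∀ k : ℕ, (h : k + 1 < 2 ^ (e + 2)) → c ⟨k, by omega⟩ = a ⟨k + 1, h⟩)
    (hclast : c ⟨2 ^ (e + 2) - 1, by have := Nat.one_le_two_pow (n := e + 2); omega⟩ = y) :
    ∀ k : Fin (2 ^ (e + 2)),
      c k =
        ((Matrix.of fun (i : ι 0) (jc : ι 1 ⊕ Unit) =>
            if qttBit 0 (k : ℕ) = 0 then
              Sum.elim (fun j => A 0 1 i j) (fun _ => 0) jc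
            else Sum.elim (fun _ => (0 : ℝ)) (fun _ => 1) jc)
          * ttProd (fun p => ι (p + 1) ⊕ Unit) e (fun q _ =>
              if qttBit (q + 1) (k : ℕ) = 0 then
                Matrix.fromBlocks (A (q + 1) 0) 0
                  (Matrix.of fun (_ : Unit) j =>
                    ttProd ι (q + 2)
                      (fun p' _ => A p' (if p' = q + 1 then 1 else 0)) default j) 0
              else
                Matrix.fromBlocks (A (q + 1) 1) 0 0 1)
          * Matrix.of fun (ic : ι (e + 1) ⊕ Unit) (j : ι (e + 2)) =>
              if qttBit (e + 1) (k : ℕ) = 0 then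
                Sum.elim (fun i => A (e + 1) 0 i j)
                  (fun _ => ttProd ι (e + 2)
                    (fun p' _ => A p' (if p' = e + 1 then 1 else 0)) default j) ic
              else
                Sum.elim (fun i => A (e + 1) 1 i j) (fun _ => y) ic)
          default default := by
  rintro ⟨kv, hk⟩
  show c ⟨kv, hk⟩ =
    (firstCore ι A kv *
        ttProd (fun p => ι (p + 1) ⊕ Unit) e (fun r _ => midCore ι A kv r) *
      lastCore ι A y kv e) default default
  rw [Matrix.mul_apply, partial_prod ι A kv e]
  have h1 : 0 < 2 ^ (e + 1) := Nat.pow_pos (by norm_num)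
  have h2 : (2:ℕ) ^ (e + 2) = 2 ^ (e + 1) * 2 := by rw [pow_succ]
  by_cases hall : kv % 2 ^ (e + 1) = 2 ^ (e + 1) - 1
  · by_cases hb : qttBit (e + 1) kv = 0
    · -- kv = 2^(e+1) - 1, carry case
      have hb' : kv / 2 ^ (e + 1) % 2 = 0 := congrArg Fin.val hb
      have hdlt : kv / 2 ^ (e + 1) < 2 := (Nat.div_lt_iff_lt_mul h1).2 (by omega)
      have hd0 : kv / 2 ^ (e + 1) = 0 := by
        generalize kv / 2 ^ (e + 1) = z at hb' hdlt
        omega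
      have hmd := Nat.div_add_mod kv (2 ^ (e + 1))
      rw [hd0, Nat.mul_zero, Nat.zero_add] at hmd
      have hkv : kv = 2 ^ (e + 1) - 1 := by omega
      have hk1 : kv + 1 < 2 ^ (e + 2) := by omega
      have hbits : ∀ p, p < e + 2 → qttBit p (kv + 1) = if p = e + 1 then 1 else 0 := by
        intro p hp
        have hkv1 : kv + 1 = 2 ^ (e + 1) := by omega
        rw [hkv1, qttBit_two_pow p (e + 1) (by omega)]
      have hcg := ttProd_congr ι (e + 2) (fun p _ => A p (qttBit p (kv + 1)))
        (fun p' _ => A p' (if p' = e + 1 then 1 else 0))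
        (fun p hp => by
          show A p (qttBit p (kv + 1)) = A p (if p = e + 1 then 1 else 0)
          rw [hbits p hp])
      calc c ⟨kv, hk⟩ = a ⟨kv + 1, hk1⟩ := hcs kv hk1
        _ = ttProd ι (e + 2) (fun p _ => A p (qttBit p (kv + 1))) default default := ha _
        _ = _ := by
            rw [hcg]
            simp [lastCore, Fintype.sum_sum_type, hall, hb, Matrix.of_apply]
    · -- kv = 2^(e+2) - 1
      have hb1 := qttBit_ne_zero hb
      have hmod : kv % 2 ^ (e + 2) = 2 ^ (e + 2) - 1 := by
        rw [mod_split, hall, hb1]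
        show _ + 2 ^ (e + 1) * 1 = _
        omega
      have hkv : kv = 2 ^ (e + 2) - 1 := by
        rw [← Nat.mod_eq_of_lt hk, hmod]
      have hbne : qttBit (e + 1) kv ≠ 0 := by rw [hb1]; decide
      have hfin : (⟨kv, hk⟩ : Fin (2 ^ (e + 2))) =
          ⟨2 ^ (e + 2) - 1, by have := Nat.one_le_two_pow (n := e + 2); omega⟩ :=
        Fin.ext hkv
      rw [hfin, hclast]
      simp [lastCore, Fintype.sum_sum_type, hall, hbne, Matrix.of_apply]
  · -- no carry at the top
    have hne : kv ≠ 2 ^ (e + 2) - 1 := by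
      intro h
      apply hall
      rw [h]
      have hrw : (2:ℕ) ^ (e + 2) - 1 = 2 ^ (e + 1) * 1 + (2 ^ (e + 1) - 1) := by omega
      rw [hrw, Nat.mul_add_mod]
      exact Nat.mod_eq_of_lt (by omega)
    have hk1 : kv + 1 < 2 ^ (e + 2) := by omega
    have hbq := qttBit_succ_of_ne (e + 1) kv hall
    have hunf : ∀ b : Fin 2, qttBit (e + 1) (kv + 1) = b →
        ttProd ι (e + 2) (fun p _ => A p (qttBit p (kv + 1))) default default =
          ∑ j', ttProd ι (e + 1) (fun p _ => A p (qttBit p (kv + 1))) default j' *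
            A (e + 1) b j' default := by
      intro b hbb
      rw [ttProd_succ, Matrix.mul_apply, hbb]
    have hstart : c ⟨kv, hk⟩ =
        ttProd ι (e + 2) (fun p _ => A p (qttBit p (kv + 1))) default default :=
      (hcs kv hk1).trans (ha ⟨kv + 1, hk1⟩)
    rw [hstart]
    by_cases hb : qttBit (e + 1) kv = 0
    · have hb1 : qttBit (e + 1) (kv + 1) = 0 := by rw [hbq, hb]
      rw [hunf 0 hb1]
      simp [lastCore, Fintype.sum_sum_type, hall, hb, Matrix.of_apply]
    · have hbk := qttBit_ne_zero hb
      have hb1 : qttBit (e + 1) (kv + 1) = 1 := by rw [hbq, hbk]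
      have hbne : qttBit (e + 1) kv ≠ 0 := by rw [hbk]; decide
      rw [hunf 1 hb1]
      simp [lastCore, Fintype.sum_sum_type, hall, hbne, Matrix.of_apply]
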